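/- With x_n = 1 + Σ_{l=2}^{n-1} ∏_{j=2}^{l} (1 - A/((m+A)·j))^{-m} and y_n = (n-1) · ∏_{i=2}^{n-1} (1 - A/((m+A)·i))^{-m}, the ratio of successive differences converges: (x_{n+1} - x_n)/(y_{n+1} - y_n) → (m+A)/(m+A+mA) as n → ∞. -/

import Mathlib

open Finset Filter Topology

theorem dms_aux_difference_ratio_limit
    (m : ℕ) (hm : 1 ≤ m) (A : ℝ) (hA : 0 < A)
    (x y : ℕ → ℝ)
    (hx : ∀ n : ℕ, 2 ≤ n →
      x n = 1 + ∑ l ∈ Finset.Icc 2 (n - 1),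
        ∏ j ∈ Finset.Icc 2 l, (1 - A / ((m + A) * (j : ℝ))) ^ (-(m : ℤ)))
    (hy : ∀ n : ℕ, 2 ≤ n →
      y n = ((n : ℝ) - 1) *
        ∏ i ∈ Finset.Icc 2 (n - 1), (1 - A / ((m + A) * (i : ℝ))) ^ (-(m : ℤ))) :
    Filter.Tendsto (fun n : ℕ => (x (n + 1) - x n) / (y (n + 1) - y n))
      Filter.atTop (nhds (((m : ℝ) + A) / ((m : ℝ) + A + (m : ℝ) * A))) := by
  have hm1 : (1:ℝ) ≤ m := by exact_mod_cast hm
  have hmA : (0:ℝ) < (m:ℝ) + A := by linarith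
  set c : ℝ := A / ((m:ℝ) + A) with hc_def
  clear_value c
  have hc0 : 0 < c := hc_def ▸ div_pos hA hmA
  have hc1 : c < 1 := by
    rw [hc_def, div_lt_one hmA]; linarith
  -- positivity of the factors
  have ht : ∀ j : ℕ, 1 ≤ j → (0:ℝ) < 1 - A / (((m:ℝ) + A) * j) := by
    intro j hj
    have hj' : (1:ℝ) ≤ (j:ℝ) := by exact_mod_cast hj
    have hle : A / (((m:ℝ) + A) * j) ≤ c := by
      rw [hc_def]
      apply div_le_div_of_nonneg_left hA.le hmA
      nlinarith
    linarith
  -- rewrite the ratio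
  have key : ∀ᶠ n : ℕ in atTop,
      (x (n+1) - x n) / (y (n+1) - y n)
        = 1 / ((n:ℝ) - ((n:ℝ) - 1) * (1 - c / n)^m) := by
    filter_upwards [eventually_ge_atTop 2] with n hn
    have hn1 : (1:ℝ) ≤ (n:ℝ) := by
      have : (2:ℝ) ≤ (n:ℝ) := by exact_mod_cast hn
      linarith
    have hnpos : (0:ℝ) < n := by linarith
    set t : ℕ → ℝ := fun j => 1 - A / (((m:ℝ) + A) * j) with ht_def
    set P : ℕ → ℝ := fun k => ∏ j ∈ Finset.Icc 2 k, t j ^ (-(m:ℤ)) with hP_def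
    have hsub : n - 1 + 1 = n := by omega
    -- x (n+1) - x n = P n
    have hx1 : x (n+1) = 1 + ∑ l ∈ Finset.Icc 2 n, P l := by
      have h := hx (n+1) (by omega)
      rw [Nat.add_sub_cancel] at h
      rw [h]
    have hsum : ∑ l ∈ Finset.Icc 2 n, P l
        = (∑ l ∈ Finset.Icc 2 (n-1), P l) + P n := by
      conv_lhs => rw [← hsub]
      rw [Finset.sum_Icc_succ_top (by omega)]
      rw [hsub]
    have hx0 : x n = 1 + ∑ l ∈ Finset.Icc 2 (n-1), P l := hx n hn
    have hxd : x (n+1) - x n = P n := by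
      rw [hx1, hx0, hsum]; ring
    -- y (n+1) - y n
    have hy1 : y (n+1) = (n:ℝ) * P n := by
      have h := hy (n+1) (by omega)
      rw [Nat.add_sub_cancel] at h
      rw [h]
      push_cast
      ring
    have hy0 : y n = ((n:ℝ) - 1) * P (n-1) := hy n hn
    have hPn : P n = P (n-1) * t n ^ (-(m:ℤ)) := by
      simp only [hP_def]
      conv_lhs => rw [← hsub]
      rw [Finset.prod_Icc_succ_top (by omega), hsub]
    -- positivity
    have htn : (0:ℝ) < t n := ht n (by omega)
    have hQ : (0:ℝ) < P (n-1) := by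
      simp only [hP_def]
      apply Finset.prod_pos
      intro j hj
      have hj1 : 1 ≤ j := by
        have := (Finset.mem_Icc.mp hj).1; omega
      exact zpow_pos (ht j hj1) _
    have htc : t n = 1 - c / n := by
      simp only [ht_def]
      rw [hc_def, div_div]
    clear_value t P
    have hyd : y (n+1) - y n = (n:ℝ) * (P (n-1) * t n ^ (-(m:ℤ))) - ((n:ℝ)-1) * P (n-1) := by
      rw [hy1, hy0, hPn]
    have hs0 : (0:ℝ) < 1 - c / n := htc ▸ htn
    have hsmpos : (0:ℝ) < (1 - c/n)^m := pow_pos hs0 m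
    have hSne : ((1 - c/n)^m) ≠ 0 := ne_of_gt hsmpos
    have hzpow : t n ^ (-(m:ℤ)) = ((1 - c/n)^m)⁻¹ := by
      rw [htc, zpow_neg, zpow_natCast]
    have h1 : ((1-c/n)^m)⁻¹ * ((1-c/n)^m) = 1 := inv_mul_cancel₀ hSne
    have hrw : (n:ℝ) * (P (n-1) * ((1-c/n)^m)⁻¹) - ((n:ℝ)-1) * P (n-1)
        = (P (n-1) * ((1-c/n)^m)⁻¹) * ((n:ℝ) - ((n:ℝ)-1)*(1-c/n)^m) := by
      linear_combination ((n:ℝ)-1) * P (n-1) * h1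
    have hne : (P (n-1) * ((1-c/n)^m)⁻¹) ≠ 0 :=
      mul_ne_zero (ne_of_gt hQ) (inv_ne_zero hSne)
    rw [hxd, hyd, hPn, hzpow, hrw, div_mul_cancel_left₀ hne, inv_eq_one_div]
  -- the limit of the simplified expression
  have hder : HasDerivAt (fun u : ℝ => (1-u)*(1-c*u)^m) (-(1 + m*c)) 0 := by
    have h1 : HasDerivAt (fun u : ℝ => 1-u) (-1) (0:ℝ) := by
      simpa using (hasDerivAt_id (0:ℝ)).const_sub 1
    have h0 : HasDerivAt (fun u : ℝ => 1-c*u) (-c) (0:ℝ) := by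
      simpa using ((hasDerivAt_id (0:ℝ)).const_mul c).const_sub 1
    have h2 := h0.pow m
    have h3 := h1.mul h2
    convert h3 using 1
    · rfl
    · rfl
    · rfl
    · simp; ring
  have hslope := hasDerivAt_iff_tendsto_slope.mp hder
  have hinv : Tendsto (fun n : ℕ => (n:ℝ)⁻¹) atTop (𝓝[≠] (0:ℝ)) := by
    apply tendsto_nhdsWithin_of_tendsto_nhds_of_eventually_within
    · exact tendsto_inv_atTop_zero.comp tendsto_natCast_atTop_atTop
    · filter_upwards [eventually_ge_atTop 1] with n hn
      have h1 : (1:ℝ) ≤ (n:ℝ) := by exact_mod_cast hn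
      have : (0:ℝ) < (n:ℝ)⁻¹ := by positivity
      exact ne_of_gt this
  have hcomp := (hslope.comp hinv).neg
  have hg : Tendsto (fun n : ℕ => (n:ℝ) - ((n:ℝ) - 1) * (1 - c / n)^m) atTop
      (𝓝 (1 + m*c)) := by
    have heq : ∀ᶠ n : ℕ in atTop,
        -slope (fun u : ℝ => (1-u)*(1-c*u)^m) 0 ((n:ℝ)⁻¹)
          = (n:ℝ) - ((n:ℝ) - 1) * (1 - c / n)^m := by
      filter_upwards [eventually_ge_atTop 1] with n hn
      have hn0 : (n:ℝ) ≠ 0 := by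
        have : (1:ℝ) ≤ (n:ℝ) := by exact_mod_cast hn
        linarith
      have h2 : ((n:ℝ))⁻¹ * (n:ℝ) = 1 := inv_mul_cancel₀ hn0
      have hS : (1 - c * ((n:ℝ))⁻¹)^m = (1 - c/(n:ℝ))^m := by
        rw [div_eq_mul_inv]
      rw [slope_def_field]
      simp only [sub_zero]
      rw [div_eq_mul_inv, inv_inv]
      linear_combination ((1 - c/(n:ℝ))^m) * h2 - ((1-((n:ℝ))⁻¹) * (n:ℝ)) * hS
    have := hcomp.congr' heq
    simpa using this
  have hpos : (0:ℝ) < 1 + m*c := by positivity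
  have hfinal : Tendsto (fun n : ℕ => 1 / ((n:ℝ) - ((n:ℝ) - 1) * (1 - c / n)^m))
      atTop (𝓝 (1 / (1 + m*c))) := tendsto_const_nhds.div hg (ne_of_gt hpos)
  have hval : 1 / (1 + (m:ℝ)*c) = ((m:ℝ) + A) / ((m:ℝ) + A + (m:ℝ) * A) := by
    rw [hc_def]
    rw [div_eq_div_iff (by rw [← hc_def]; exact ne_of_gt hpos) (by positivity)]
    field_simp
  rw [← hval]
  exact Tendsto.congr' (key.mono fun _ h => h.symm) hfinal
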